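/- Let (X,b) be a locally finite weighted graph all of whose connected components are infinite, and let V : X → ℝ be such that for every x ∈ X either V(x) ≥ 0 or V(x) + 2·deg(x) ≤ 0. Then the Schrödinger operator L_V : C(X) → C(X), L_V f(x) = ∑_{y∈X} b(x,y)(f(x)-f(y)) + V(x)f(x), is surjective. -/

import Mathlib

/-- **Surjectivity of Schrödinger operators satisfying the pointwise maximum principle.**
Let `(X,b)` be a locally finite weighted graph all of whose connected components are infinite
and let `V : X → ℝ` be such that for every `x ∈ X` either `V x ≥ 0` or `V x + 2 deg x ≤ 0`.
Then the Schrödinger operator `L_V f x = ∑_y b(x,y)(f x - f y) + V x · f x` is surjective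
on `C(X)`. -/
theorem schroedinger_surjective_of_pointwise_sign
    {X : Type*} [Countable X]
    (b : X → X → ℝ)
    (hb0 : ∀ x, b x x = 0)
    (hbnn : ∀ x y, 0 ≤ b x y)
    (hsym : ∀ x y, b x y = b y x)
    (hlf : ∀ x, {y | b x y ≠ 0}.Finite)
    (hinfcomp : ∀ x, {y | Relation.ReflTransGen (fun u v => 0 < b u v) x y}.Infinite)
    (V : X → ℝ)
    (hV : ∀ x, 0 ≤ V x ∨ V x + 2 * (∑ᶠ y, b x y) ≤ 0) :
    Function.Surjective (fun (f : X → ℂ) (x : X) =>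
      (∑ᶠ y, (b x y : ℂ) * (f x - f y)) + (V x : ℂ) * f x) := by
  classical
  set S : X → Finset X := fun x => (hlf x).toFinset with hSdef
  have hmemS : ∀ x y, y ∈ S x ↔ b x y ≠ 0 := by
    intro x y; simp [hSdef]
  have hxS : ∀ x, x ∉ S x := by
    intro x hx; exact (hmemS x x).1 hx (hb0 x)
  have hL : ∀ (f : X → ℂ) (x : X),
      (∑ᶠ y, (b x y : ℂ) * (f x - f y)) = ∑ y ∈ S x, (b x y : ℂ) * (f x - f y) := by
    intro f x
    apply finsum_eq_finset_sum_of_support_subset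
    intro y hy
    simp only [Function.mem_support] at hy
    rw [Finset.mem_coe, hmemS]
    intro h0; apply hy; rw [h0]; push_cast; ring
  have hdeg : ∀ x, (∑ᶠ y, b x y) = ∑ y ∈ S x, b x y := by
    intro x
    apply finsum_eq_finset_sum_of_support_subset
    intro y hy; rw [Finset.mem_coe, hmemS]; simpa using hy
  -- The operator as a linear map on finitely supported functions
  let B : (X →₀ ℂ) →ₗ[ℂ] (X → ℂ) :=
    { toFun := fun φ x => (∑ y ∈ S x, (b x y : ℂ) * (φ x - φ y)) + (V x : ℂ) * φ x
      map_add' := by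
        intro φ ψ; funext x
        simp only [Finsupp.coe_add, Pi.add_apply]
        rw [Finset.sum_congr rfl (fun y _ => show (b x y : ℂ) * (φ x + ψ x - (φ y + ψ y))
          = (b x y : ℂ) * (φ x - φ y) + (b x y : ℂ) * (ψ x - ψ y) by ring),
          Finset.sum_add_distrib]
        ring
      map_smul' := by
        intro c φ; funext x
        simp only [Finsupp.coe_smul, Pi.smul_apply, smul_eq_mul, RingHom.id_apply]
        rw [mul_add, Finset.mul_sum,
          Finset.sum_congr rfl (fun y _ => show (b x y : ℂ) * (c * φ x - c * φ y)
            = c * ((b x y : ℂ) * (φ x - φ y)) by ring)]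
        ring }
  -- injectivity of B via the maximum principle
  have hBkey : ∀ φ : X →₀ ℂ, B φ = 0 → φ = 0 := by
    intro φ hφ
    by_contra hne
    obtain ⟨x0, hx0mem, hx0max⟩ := φ.support.exists_max_image
      (fun x => ‖φ x‖) (Finsupp.support_nonempty_iff.2 hne)
    set M : ℝ := ‖φ x0‖ with hMdef
    have hM0 : 0 < M := by
      have := Finsupp.mem_support_iff.1 hx0mem
      simpa [hMdef] using this
    have hMb : ∀ y, ‖φ y‖ ≤ M := by
      intro y
      by_cases hy : y ∈ φ.support
      · exact hx0max y hy
      · have : φ y = 0 := Finsupp.notMem_support_iff.1 hy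
        rw [this]; simpa using hM0.le
    have step : ∀ x, ‖φ x‖ = M → ∀ z, 0 < b x z → ‖φ z‖ = M := by
      intro x habs z hz
      have hx : (∑ y ∈ S x, (b x y : ℂ) * (φ x - φ y)) + (V x : ℂ) * φ x = 0 :=
        congrFun hφ x
      set D : ℝ := ∑ y ∈ S x, b x y with hDdef
      have hD0 : 0 ≤ D := Finset.sum_nonneg fun y _ => hbnn x y
      have hsplit : ∑ y ∈ S x, (b x y : ℂ) * (φ x - φ y)
          = ((D : ℝ) : ℂ) * φ x - ∑ y ∈ S x, (b x y : ℂ) * φ y := by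
        simp only [mul_sub]
        rw [Finset.sum_sub_distrib, ← Finset.sum_mul, hDdef]
        push_cast
        ring
      have hxeq : ((D + V x : ℝ) : ℂ) * φ x = ∑ y ∈ S x, (b x y : ℂ) * φ y := by
        rw [hsplit] at hx
        push_cast
        linear_combination hx
      have haV : D ≤ |D + V x| := by
        rcases hV x with h | h
        · rw [abs_of_nonneg (by linarith)]; linarith
        · rw [hdeg x, ← hDdef] at h
          rw [abs_of_nonpos (by linarith)]; linarith
      have hub : ∑ y ∈ S x, b x y * ‖φ y‖ ≤ D * M := by
        rw [hDdef, Finset.sum_mul]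
        exact Finset.sum_le_sum fun y _ =>
          mul_le_mul_of_nonneg_left (hMb y) (hbnn x y)
      have hlb : |D + V x| * M = ‖∑ y ∈ S x, (b x y : ℂ) * φ y‖ := by
        rw [← hxeq, norm_mul, Complex.norm_real, Real.norm_eq_abs, habs]
      have habs_sum : ‖∑ y ∈ S x, (b x y : ℂ) * φ y‖
          ≤ ∑ y ∈ S x, b x y * ‖φ y‖ := by
        refine le_trans (norm_sum_le _ _) (Finset.sum_le_sum fun y _ => ?_)
        rw [norm_mul, Complex.norm_real, Real.norm_eq_abs, abs_of_nonneg (hbnn x y)]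
      have hDM : D * M ≤ |D + V x| * M := mul_le_mul_of_nonneg_right haV hM0.le
      have hsum_eq : ∑ y ∈ S x, b x y * ‖φ y‖ = D * M := by
        have h1 : |D + V x| * M ≤ ∑ y ∈ S x, b x y * ‖φ y‖ := by
          rw [hlb]
          exact habs_sum
        linarith
      have hzero : ∑ y ∈ S x, b x y * (M - ‖φ y‖) = 0 := by
        rw [Finset.sum_congr rfl (fun y _ => show b x y * (M - ‖φ y‖)
          = b x y * M - b x y * ‖φ y‖ by ring),
          Finset.sum_sub_distrib, hsum_eq, ← Finset.sum_mul, ← hDdef]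
        ring
      have hzS : z ∈ S x := (hmemS x z).2 (ne_of_gt hz)
      have := (Finset.sum_eq_zero_iff_of_nonneg (fun y _ =>
        mul_nonneg (hbnn x y) (by linarith [hMb y]))).1 hzero z hzS
      have hMz : M - ‖φ z‖ = 0 := by
        rcases mul_eq_zero.1 this with h | h
        · exact absurd h (ne_of_gt hz)
        · exact h
      linarith [hMz]
    have hcomp : ∀ y, Relation.ReflTransGen (fun u v => 0 < b u v) x0 y →
        ‖φ y‖ = M := by
      intro y hy
      induction hy with
      | refl => rfl
      | tail h1 h2 ih => exact step _ ih _ h2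
    have hsubset : {y | Relation.ReflTransGen (fun u v => 0 < b u v) x0 y} ⊆ ↑φ.support := by
      intro y hy
      simp only [Finset.mem_coe, Finsupp.mem_support_iff]
      intro h0
      have := hcomp y hy
      rw [h0] at this
      simp at this
      exact absurd this.symm (ne_of_gt hM0)
    exact absurd ((hinfcomp x0).mono hsubset) φ.support.finite_toSet.not_infinite
  have hBinj : Function.Injective B := by
    intro φ ψ h
    have := hBkey (φ - ψ) (by rw [map_sub, h, sub_self])
    exact sub_eq_zero.1 this
  -- duality: surjectivity from injectivity of the (formal) transpose
  intro g
  let pairing : (X →₀ ℂ) →ₗ[ℂ] ℂ := Finsupp.linearCombination ℂ g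
  let e := LinearEquiv.ofInjective B hBinj
  let lam : ↥(LinearMap.range B) →ₗ[ℂ] ℂ := pairing ∘ₗ e.symm.toLinearMap
  obtain ⟨Lam, hLam⟩ := lam.exists_extend
  have hLamB : ∀ ψ : X →₀ ℂ, Lam (B ψ) = pairing ψ := by
    intro ψ
    have h1 : Lam ((LinearMap.range B).subtype ⟨B ψ, LinearMap.mem_range_self B ψ⟩)
        = lam ⟨B ψ, LinearMap.mem_range_self B ψ⟩ := LinearMap.congr_fun hLam _
    have h2 : e.symm ⟨B ψ, LinearMap.mem_range_self B ψ⟩ = ψ := by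
      apply e.injective
      rw [LinearEquiv.apply_symm_apply]
      ext1
      simp [e, LinearEquiv.ofInjective_apply]
    simpa [lam, h2] using h1
  let δ : X → (X → ℂ) := fun z => Pi.single z 1
  refine ⟨fun x => Lam (δ x), ?_⟩
  funext x
  show (∑ᶠ y, (b x y : ℂ) * (Lam (δ x) - Lam (δ y)))
      + (V x : ℂ) * Lam (δ x) = g x
  rw [hL (fun z => Lam (δ z)) x]
  have hterm : ∀ y, (b x y : ℂ) * (Lam (δ x) - Lam (δ y))
      = Lam ((b x y : ℂ) • (δ x - δ y)) := by
    intro y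
    rw [map_smul, map_sub]
    rfl
  have hVterm : (V x : ℂ) * Lam (δ x) = Lam ((V x : ℂ) • δ x) := by
    rw [map_smul]; rfl
  rw [Finset.sum_congr rfl (fun y _ => hterm y), hVterm, ← map_sum, ← map_add]
  have hwx : (∑ y ∈ S x, (b x y : ℂ) • (δ x - δ y))
      + (V x : ℂ) • δ x = B (Finsupp.single x 1) := by
    funext u
    simp only [δ, Pi.add_apply, Pi.smul_apply, Finset.sum_apply, Pi.sub_apply,
      Pi.single_apply, smul_eq_mul]
    show (∑ y ∈ S x, (b x y : ℂ) * ((if u = x then 1 else 0) - if u = y then 1 else 0))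
        + (V x : ℂ) * (if u = x then 1 else 0)
      = (∑ y ∈ S u, (b u y : ℂ) * ((Finsupp.single x 1 : X →₀ ℂ) u - (Finsupp.single x 1 : X →₀ ℂ) y))
        + (V u : ℂ) * (Finsupp.single x 1 : X →₀ ℂ) u
    by_cases hux : u = x
    · subst hux
      simp only [eq_self_iff_true, if_true, Finsupp.single_eq_same]
      have h1 : ∀ y ∈ S u, (b u y : ℂ) * ((1:ℂ) - if u = y then 1 else 0) = (b u y : ℂ) := by
        intro y hy
        rw [if_neg, sub_zero, mul_one]
        rintro rfl; exact hxS u hy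
      have h2 : ∀ y ∈ S u, (b u y : ℂ) * ((1:ℂ) - (Finsupp.single u 1 : X →₀ ℂ) y) = (b u y : ℂ) := by
        intro y hy
        rw [Finsupp.single_apply, if_neg, sub_zero, mul_one]
        rintro rfl; exact hxS u hy
      rw [Finset.sum_congr rfl h1, Finset.sum_congr rfl h2]
    · have hxu : ¬ (x = u) := fun h => hux h.symm
      simp only [if_neg hux, Finsupp.single_apply, if_neg hxu]
      have h1 : (∑ y ∈ S x, (b x y : ℂ) * ((0:ℂ) - if u = y then 1 else 0))
          = -(if u ∈ S x then (b x u : ℂ) else 0) := by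
        rw [Finset.sum_congr rfl (fun y _ => show (b x y : ℂ) * ((0:ℂ) - if u = y then 1 else 0)
          = -(if u = y then (b x y : ℂ) else 0) by split <;> simp)]
        rw [Finset.sum_neg_distrib, Finset.sum_ite_eq]
      have h2 : (∑ y ∈ S u, (b u y : ℂ) * ((0:ℂ) - if x = y then 1 else 0))
          = -(if x ∈ S u then (b u x : ℂ) else 0) := by
        rw [Finset.sum_congr rfl (fun y _ => show (b u y : ℂ) * ((0:ℂ) - if x = y then 1 else 0)
          = -(if x = y then (b u y : ℂ) else 0) by split <;> simp)]
        rw [Finset.sum_neg_distrib, Finset.sum_ite_eq]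
      rw [h1, h2]
      have hx' : (if u ∈ S x then (b x u : ℂ) else 0) = (b x u : ℂ) := by
        split
        · rfl
        · next h => rw [(not_not.1 (fun hh => h ((hmemS x u).2 hh)) : b x u = 0)]; norm_num
      have hu' : (if x ∈ S u then (b u x : ℂ) else 0) = (b u x : ℂ) := by
        split
        · rfl
        · next h => rw [(not_not.1 (fun hh => h ((hmemS u x).2 hh)) : b u x = 0)]; norm_num
      rw [hx', hu', hsym x u]
      ring
  rw [hwx, hLamB]
  simp [pairing, Finsupp.linearCombination_single]
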